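/- Let a₁, ..., a_{2n-1} be distinct nonzero points of 𝔻 with a₁ + \bar{a₁}a_{2j}a_{2j+1} = a_{2j} + a_{2j+1} for j = 1, ..., n-1, and B(z) = z ∏_{k=1}^{2n-1}(z-a_k)/(1-\bar{a_k}z). Then B = B₂ ∘ B₁ where B₁(z) = z(z-a₁)/(1-\bar{a₁}z) and B₂(z) = z ∏_{j=1}^{n-1}(z + a_{2j}a_{2j+1})/(1 + \overline{a_{2j}a_{2j+1}}z). -/

import Mathlib

open Complex

lemma one_sub_conj_mul_ne {a z : ℂ} (ha : ‖a‖ < 1) (hz : ‖z‖ < 1) :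
    1 - (starRingEnd ℂ) a * z ≠ 0 := by
  intro h
  have h1 : (starRingEnd ℂ) a * z = 1 := by linear_combination -h
  have h2 := congrArg (‖·‖) h1
  rw [norm_mul, norm_one, Complex.norm_conj] at h2
  nlinarith [norm_nonneg a, norm_nonneg z]

lemma pair_eq {a b c z : ℂ} (ha : ‖a‖ < 1) (hb : ‖b‖ < 1)
    (hc : ‖c‖ < 1) (hz : ‖z‖ < 1)
    (hcond : a + (starRingEnd ℂ) a * b * c = b + c) :
    (z - b) / (1 - (starRingEnd ℂ) b * z) * ((z - c) / (1 - (starRingEnd ℂ) c * z)) =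
      (z * ((z - a) / (1 - (starRingEnd ℂ) a * z)) + b * c) /
        (1 + (starRingEnd ℂ) (b * c) * (z * ((z - a) / (1 - (starRingEnd ℂ) a * z)))) := by
  set d1 := 1 - (starRingEnd ℂ) a * z with hd1def
  have hd1 : d1 ≠ 0 := one_sub_conj_mul_ne ha hz
  have hd2 : (1 - (starRingEnd ℂ) b * z) ≠ 0 := one_sub_conj_mul_ne hb hz
  have hd3 : (1 - (starRingEnd ℂ) c * z) ≠ 0 := one_sub_conj_mul_ne hc hz
  set w := z * ((z - a) / d1) with hw
  have hwd : w * d1 = z * (z - a) := by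
    rw [hw, mul_assoc, div_mul_cancel₀ _ hd1]
  have hcond' : (starRingEnd ℂ) a + a * ((starRingEnd ℂ) b * (starRingEnd ℂ) c)
      = (starRingEnd ℂ) b + (starRingEnd ℂ) c := by
    have h := congrArg (starRingEnd ℂ) hcond
    simpa [map_add, map_mul, mul_comm, mul_assoc, mul_left_comm] using h
  have hnum : (w + b * c) * d1 = (z - b) * (z - c) := by
    have h : w * d1 + b * c * d1 = (z - b) * (z - c) := by
      rw [hwd, hd1def]
      linear_combination (-z) * hcond
    linear_combination h
  have hden : (1 + (starRingEnd ℂ) (b * c) * w) * d1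
      = (1 - (starRingEnd ℂ) b * z) * (1 - (starRingEnd ℂ) c * z) := by
    have h : d1 + (starRingEnd ℂ) (b * c) * (w * d1)
        = (1 - (starRingEnd ℂ) b * z) * (1 - (starRingEnd ℂ) c * z) := by
      rw [hwd, hd1def, map_mul]
      linear_combination (-z) * hcond'
    linear_combination h
  rw [div_mul_div_comm, ← hnum, ← hden, mul_div_mul_right _ _ hd1]

lemma split_prod (f : ℕ → ℂ) (m : ℕ) :
    ∏ k ∈ Finset.Icc 2 (2 * m + 1), f k
      = ∏ j ∈ Finset.Icc 1 m, (f (2 * j) * f (2 * j + 1)) := by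
  induction m with
  | zero => simp
  | succ m ih =>
    have e1 : 2 * (m + 1) + 1 = (2 * m + 2) + 1 := by ring
    have e2 : 2 * m + 2 = (2 * m + 1) + 1 := by ring
    rw [e1, Finset.prod_Icc_succ_top (by omega), e2,
        Finset.prod_Icc_succ_top (by omega), ih,
        Finset.prod_Icc_succ_top (by omega : 1 ≤ m + 1)]
    have e3 : 2 * (m + 1) = 2 * m + 1 + 1 := by ring
    rw [e3]
    ring

/-- A degree-`2n` Blaschke product whose zeros satisfy
`a₁ + conj a₁ · a_{2j} a_{2j+1} = a_{2j} + a_{2j+1}` for `j = 1, …, n-1`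
decomposes as `B = B₂ ∘ B₁` with `B₁ z = z (z - a₁)/(1 - conj a₁ z)` and
`B₂ w = w ∏_{j=1}^{n-1} (w + a_{2j} a_{2j+1})/(1 + conj (a_{2j} a_{2j+1}) w)`. -/
theorem degree_2n_decomposition (n : ℕ) (hn : 2 ≤ n) (a : ℕ → ℂ)
    (ha : ∀ k ∈ Finset.Icc 1 (2 * n - 1), ‖a k‖ < 1)
    (ha0 : ∀ k ∈ Finset.Icc 1 (2 * n - 1), a k ≠ 0)
    (hainj : Set.InjOn a (Finset.Icc 1 (2 * n - 1)))
    (hcond : ∀ j ∈ Finset.Icc 1 (n - 1),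
      a 1 + (starRingEnd ℂ) (a 1) * a (2 * j) * a (2 * j + 1) =
        a (2 * j) + a (2 * j + 1)) :
    ∀ z : ℂ, ‖z‖ < 1 →
      z * ∏ k ∈ Finset.Icc 1 (2 * n - 1),
        (z - a k) / (1 - (starRingEnd ℂ) (a k) * z) =
      (z * ((z - a 1) / (1 - (starRingEnd ℂ) (a 1) * z))) *
        ∏ j ∈ Finset.Icc 1 (n - 1),
          ((z * ((z - a 1) / (1 - (starRingEnd ℂ) (a 1) * z))) + a (2 * j) * a (2 * j + 1)) /
          (1 + (starRingEnd ℂ) (a (2 * j) * a (2 * j + 1)) *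
            (z * ((z - a 1) / (1 - (starRingEnd ℂ) (a 1) * z)))) := by
  intro z hz
  set f : ℕ → ℂ := fun k => (z - a k) / (1 - (starRingEnd ℂ) (a k) * z) with hf
  have hins : Finset.Icc 1 (2 * n - 1) = insert 1 (Finset.Icc 2 (2 * n - 1)) := by
    ext k
    simp only [Finset.mem_Icc, Finset.mem_insert]
    omega
  have hnotmem : (1 : ℕ) ∉ Finset.Icc 2 (2 * n - 1) := by simp
  have h21 : 2 * n - 1 = 2 * (n - 1) + 1 := by omega
  have hsplit : ∏ k ∈ Finset.Icc 1 (2 * n - 1), f k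
      = f 1 * ∏ j ∈ Finset.Icc 1 (n - 1), (f (2 * j) * f (2 * j + 1)) := by
    rw [hins, Finset.prod_insert hnotmem, h21, split_prod]
  rw [hsplit]
  have h1mem : (1 : ℕ) ∈ Finset.Icc 1 (2 * n - 1) := by
    simp only [Finset.mem_Icc]; omega
  have hprod : ∏ j ∈ Finset.Icc 1 (n - 1), (f (2 * j) * f (2 * j + 1))
      = ∏ j ∈ Finset.Icc 1 (n - 1),
          ((z * ((z - a 1) / (1 - (starRingEnd ℂ) (a 1) * z))) + a (2 * j) * a (2 * j + 1)) /
          (1 + (starRingEnd ℂ) (a (2 * j) * a (2 * j + 1)) *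
            (z * ((z - a 1) / (1 - (starRingEnd ℂ) (a 1) * z)))) := by
    apply Finset.prod_congr rfl
    intro j hj
    simp only [Finset.mem_Icc] at hj
    have hb : (2 * j : ℕ) ∈ Finset.Icc 1 (2 * n - 1) := by
      simp only [Finset.mem_Icc]; omega
    have hc : (2 * j + 1 : ℕ) ∈ Finset.Icc 1 (2 * n - 1) := by
      simp only [Finset.mem_Icc]; omega
    exact pair_eq (ha 1 h1mem) (ha _ hb) (ha _ hc) hz
      (hcond j (by simp only [Finset.mem_Icc]; omega))
  rw [hprod, hf]
  ring
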